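/- Let d ≥ 2 and g ∈ ℕ^{n+1} be a sum of at least 4 elements of A_{d,n} = {x ∈ ℕ^{n+1} : Σx_i = d}. Then for every v ∈ ℕ^{n+1}, the first reduced simplicial homology of Δ_{g+v} (with ℂ coefficients) vanishes, where Δ_w is the complex on A_{d,n} with faces F satisfying Σ_{a∈F} a ≤ w coordinatewise. -/

import Mathlib

open Finset

/-- `A_{d,n}`: the exponent vectors of the degree-`d` monomials in `n+1` variables,
i.e. `{x ∈ ℕ^{n+1} : Σ_i x_i = d}`. -/
def Adn (d n : ℕ) : Set (Fin (n + 1) → ℕ) :=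
  {x | ∑ i, x i = d}

/-- `F` is a face of the simplicial complex `Δ_v` on the vertex set `A_{d,n}`:
all vertices of `F` lie in `A_{d,n}` and the coordinatewise sum of the vertices of `F`
is at most `v`. -/
def IsFace (d n : ℕ) (v : Fin (n + 1) → ℕ) (F : Finset (Fin (n + 1) → ℕ)) : Prop :=
  ↑F ⊆ Adn d n ∧ ∀ i, ∑ a ∈ F, a i ≤ v i

/-- (Ordered) simplicial `k`-chains with complex coefficients on the vertex set
`ℕ^{n+1} ⊇ A_{d,n}`: formal `ℂ`-linear combinations of `(k+1)`-tuples of vertices. -/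
abbrev PChain (n k : ℕ) : Type :=
  (Fin (k + 1) → (Fin (n + 1) → ℕ)) →₀ ℂ

/-- The simplicial boundary operator on ordered chains. -/
noncomputable def bdry {n k : ℕ} (c : PChain n (k + 1)) : PChain n k :=
  c.sum fun σ a =>
    ∑ i : Fin (k + 2), ((-1 : ℂ) ^ (i : ℕ) * a) • Finsupp.single (σ ∘ i.succAbove) 1

/-- The augmentation (sum of coefficients) of a chain. -/
noncomputable def aug {n k : ℕ} (c : PChain n k) : ℂ :=
  c.sum fun _ a => a

/-- (Reduced) cycles: in positive degree, chains with vanishing boundary; in degree `0`,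
chains with vanishing augmentation. -/
def IsCycle {n : ℕ} : ∀ {k : ℕ}, PChain n k → Prop
  | 0, c => aug c = 0
  | _ + 1, c => bdry c = 0

/-- The chain `c` is supported on the simplicial complex `Δ_v`. -/
def ChainIn (d n : ℕ) (v : Fin (n + 1) → ℕ) {k : ℕ} (c : PChain n k) : Prop :=
  ∀ σ ∈ c.support, IsFace d n v (Finset.image σ Finset.univ)

/-- Vanishing of the `k`-th reduced (simplicial) homology of `Δ_v` with `ℂ`-coefficients:
every supported `k`-cycle is the boundary of a supported `(k+1)`-chain. -/
def Hvanish (d n k : ℕ) (v : Fin (n + 1) → ℕ) : Prop :=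
  ∀ c : PChain n k, ChainIn d n v c → IsCycle c →
    ∃ η : PChain n (k + 1), ChainIn d n v η ∧ bdry η = c

/-- The `r`-th standard basis vector `e_r` of `ℕ^m`. -/
def ee {m : ℕ} (r : Fin m) : Fin m → ℕ := fun i => if i = r then 1 else 0

/-- Join of a chain with a vertex: `a ∗ c`. -/
noncomputable def vjoin {n k : ℕ} (a : Fin (n + 1) → ℕ) (c : PChain n k) :
    PChain n (k + 1) :=
  c.sum fun τ b => b • Finsupp.single (Fin.cons a τ) 1

/-- Join of two chains, `c₁ ∗ c₂` (with the appropriate sign conventions). -/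
noncomputable def joinChain {n s t : ℕ} (c₁ : PChain n s) (c₂ : PChain n t) :
    PChain n (s + t + 1) :=
  ((-1 : ℂ) ^ (s * (s + 1) / 2)) •
    c₁.sum fun σ a => c₂.sum fun τ b =>
      (a * b) • Finsupp.single
        (fun i : Fin (s + t + 1 + 1) =>
          Fin.append σ τ (Fin.cast (show s + t + 1 + 1 = (s + 1) + (t + 1) by omega) i)) 1

/-- Reindexing of chains along an equality of dimensions. -/
noncomputable def castChain {n k k' : ℕ} (h : k = k') (c : PChain n k) : PChain n k' :=
  Finsupp.mapDomain (fun σ => σ ∘ Fin.cast (show k' + 1 = k + 1 by omega)) c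

/-- The chain `c` is supported on the union complex
`X_b = Δ_b ∪ Δ_{b−e₁+e₂} ∪ ⋯ ∪ Δ_{b−b₁e₁+b₁e₂}` (coordinates `e₁, e₂` are the
first two coordinates, i.e. indices `0, 1`). -/
def ChainInX (d n : ℕ) (b : Fin (n + 1) → ℕ) {k : ℕ} (c : PChain n k) : Prop :=
  ∀ σ ∈ c.support, ∃ j ≤ b 0,
    IsFace d n (fun i => if i = 0 then b 0 - j else if i = 1 then b 1 + j else b i)
      (Finset.image σ Finset.univ)


section Helpers

variable {n : ℕ}

local notation "V" => (Fin (n+1) → ℕ)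

lemma exists_le_sum {m : ℕ} (cap : Fin m → ℕ) (k : ℕ) (hk : k ≤ ∑ i, cap i) :
    ∃ z : Fin m → ℕ, (∀ i, z i ≤ cap i) ∧ ∑ i, z i = k := by
  induction k with
  | zero => exact ⟨fun _ => 0, fun i => Nat.zero_le _, by simp⟩
  | succ k ih =>
    obtain ⟨z, hz, hzs⟩ := ih (Nat.le_of_succ_le hk)
    have : ∃ i, z i < cap i := by
      by_contra h
      push_neg at h
      have : ∑ i, cap i ≤ ∑ i, z i := Finset.sum_le_sum fun i _ => h i
      omega
    obtain ⟨i, hi⟩ := this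
    refine ⟨Function.update z i (z i + 1), fun j => ?_, ?_⟩
    · rcases eq_or_ne j i with rfl | hj
      · simp; omega
      · simp [Function.update_of_ne hj, hz j]
    · rw [Finset.sum_update_of_mem (Finset.mem_univ i)]
      have h2 : ∑ j : Fin m, z j = z i + ∑ x ∈ univ \ {i}, z x := by
        rw [Finset.sum_eq_sum_sdiff_singleton_add (Finset.mem_univ i) z]; ring
      omega

lemma exists_between_sum {m : ℕ} (r cap : Fin m → ℕ) (hrc : ∀ i, r i ≤ cap i) (k : ℕ)
    (hk1 : ∑ i, r i ≤ k) (hk2 : k ≤ ∑ i, cap i) :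
    ∃ z : Fin m → ℕ, (∀ i, r i ≤ z i) ∧ (∀ i, z i ≤ cap i) ∧ ∑ i, z i = k := by
  have hsum : ∑ i, (cap i - r i) + ∑ i, r i = ∑ i, cap i := by
    rw [← Finset.sum_add_distrib]
    exact Finset.sum_congr rfl fun i _ => by have := hrc i; omega
  obtain ⟨z0, hz0, hz0s⟩ := exists_le_sum (fun i => cap i - r i) (k - ∑ i, r i)
    (by simpa using by omega)
  have hz0' : ∀ i, z0 i ≤ cap i - r i := hz0
  have hz0s' : ∑ i, z0 i = k - ∑ i, r i := hz0s
  refine ⟨fun i => r i + z0 i, fun i => by simp, fun i => by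
    have := hz0' i; have := hrc i; simp; omega, ?_⟩
  have : ∑ i, (r i + z0 i) = ∑ i, r i + ∑ i, z0 i := Finset.sum_add_distrib
  simp only [this, hz0s']
  omega

lemma sum_image_le {α β : Type*} [DecidableEq β] (s : Finset α) (g : α → β) (f : β → ℕ) :
    ∑ b ∈ s.image g, f b ≤ ∑ a ∈ s, f (g a) := by
  classical
  induction s using Finset.induction_on with
  | empty => simp
  | @insert x s' hx ih =>
    rw [Finset.image_insert, Finset.sum_insert hx]
    by_cases hgx : g x ∈ s'.image g
    · rw [Finset.insert_eq_self.2 hgx]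
      omega
    · rw [Finset.sum_insert hgx]
      omega

end Helpers

section FaceLemmas

variable {d n : ℕ} {w : Fin (n+1) → ℕ}

lemma mem_Adn_iff {x : Fin (n+1) → ℕ} : x ∈ Adn d n ↔ ∑ i, x i = d := Iff.rfl

lemma isFace_of {k : ℕ} (σ : Fin (k+1) → (Fin (n+1) → ℕ))
    (h1 : ∀ j, σ j ∈ Adn d n) (h2 : ∀ i, ∑ j, σ j i ≤ w i) :
    IsFace d n w (Finset.image σ Finset.univ) := by
  classical
  constructor
  · intro a ha
    simp only [Finset.coe_image, Set.mem_image] at ha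
    obtain ⟨j, _, rfl⟩ := ha
    exact h1 j
  · intro i
    calc ∑ a ∈ Finset.image σ Finset.univ, a i
        ≤ ∑ j : Fin (k+1), σ j i := sum_image_le _ _ _
      _ ≤ w i := h2 i

lemma isFace_subset {F G : Finset (Fin (n+1) → ℕ)} (hFG : G ⊆ F) (hF : IsFace d n w F) :
    IsFace d n w G := by
  refine ⟨fun a ha => hF.1 (hFG ha), fun i => le_trans ?_ (hF.2 i)⟩
  exact Finset.sum_le_sum_of_subset hFG

lemma isFace_pair_sub {k : ℕ} (σ : Fin (k+1) → (Fin (n+1) → ℕ)) (x y : Fin (n+1) → ℕ)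
    (hx : x ∈ Adn d n) (hy : y ∈ Adn d n) (hxy : ∀ i, x i + y i ≤ w i)
    (hσ : ∀ j, σ j = x ∨ σ j = y) :
    IsFace d n w (Finset.image σ Finset.univ) := by
  classical
  refine isFace_subset (F := {x, y}) ?_ ?_
  · intro a ha
    simp only [Finset.mem_image] at ha
    obtain ⟨j, _, rfl⟩ := ha
    rcases hσ j with h | h <;> simp [h]
  · constructor
    · intro a ha
      simp only [Finset.coe_insert, Finset.coe_singleton, Set.mem_insert_iff,
        Set.mem_singleton_iff] at ha
      rcases ha with rfl | rfl <;> assumption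
    · intro i
      by_cases hxy' : x = y
      · subst hxy'
        simp only [Finset.insert_eq_self.2 (Finset.mem_singleton_self x),
          Finset.sum_singleton]
        have := hxy i; omega
      · rw [Finset.sum_pair hxy']
        exact hxy i

lemma isFace_single_sub {k : ℕ} (σ : Fin (k+1) → (Fin (n+1) → ℕ)) (x : Fin (n+1) → ℕ)
    (hx : x ∈ Adn d n) (hxw : ∀ i, x i ≤ w i)
    (hσ : ∀ j, σ j = x) :
    IsFace d n w (Finset.image σ Finset.univ) := by
  classical
  refine isFace_subset (F := {x}) ?_ ?_
  · intro a ha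
    simp only [Finset.mem_image] at ha
    obtain ⟨j, _, rfl⟩ := ha
    simp [hσ j]
  · constructor
    · intro a ha
      simp only [Finset.coe_singleton, Set.mem_singleton_iff] at ha
      rwa [ha]
    · intro i
      simpa using hxw i

end FaceLemmas

section BdryLemmas

variable {n k : ℕ}

lemma bdry_single (σ : Fin (k+1+1) → (Fin (n+1) → ℕ)) (x : ℂ) :
    bdry (Finsupp.single σ x) =
      ∑ i : Fin (k+2), ((-1 : ℂ) ^ (i : ℕ) * x) • Finsupp.single (σ ∘ i.succAbove) 1 := by
  unfold bdry
  rw [Finsupp.sum_single_index]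
  simp

lemma bdry_zero : bdry (0 : PChain n (k+1)) = 0 := by
  unfold bdry
  simp [Finsupp.sum_zero_index]

lemma bdry_add (c₁ c₂ : PChain n (k+1)) : bdry (c₁ + c₂) = bdry c₁ + bdry c₂ := by
  unfold bdry
  apply Finsupp.sum_add_index'
  · intro σ; simp
  · intro σ b₁ b₂
    rw [← Finset.sum_add_distrib]
    apply Finset.sum_congr rfl
    intro i _
    rw [mul_add, add_smul]

lemma bdry_smul (x : ℂ) (c : PChain n (k+1)) : bdry (x • c) = x • bdry c := by
  unfold bdry
  rw [Finsupp.sum_smul_index']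
  · rw [Finsupp.smul_sum]
    apply Finsupp.sum_congr
    intro σ _
    rw [Finset.smul_sum]
    apply Finset.sum_congr rfl
    intro i _
    rw [smul_smul, smul_eq_mul]
    ring_nf
  · intro σ
    simp

lemma bdry_neg (c : PChain n (k+1)) : bdry (-c) = - bdry c := by
  have : (-c) = (-1 : ℂ) • c := by simp
  rw [this, bdry_smul]; simp

lemma bdry_sub (c₁ c₂ : PChain n (k+1)) : bdry (c₁ - c₂) = bdry c₁ - bdry c₂ := by
  rw [sub_eq_add_neg, bdry_add, bdry_neg, sub_eq_add_neg]

lemma bdry_finsetSum {α : Type*} (s : Finset α) (f : α → PChain n (k+1)) :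
    bdry (∑ a ∈ s, f a) = ∑ a ∈ s, bdry (f a) := by
  classical
  induction s using Finset.induction_on with
  | empty => simp [bdry_zero]
  | @insert x s' hx ih =>
    rw [Finset.sum_insert hx, Finset.sum_insert hx, bdry_add, ih]

end BdryLemmas

section EdgTri

variable {n : ℕ}

/-- An oriented edge as a `1`-chain. -/
noncomputable def edg (a b : Fin (n+1) → ℕ) : PChain n 1 := Finsupp.single ![a, b] 1

/-- An oriented triangle as a `2`-chain. -/
noncomputable def tri (a b c : Fin (n+1) → ℕ) : PChain n 2 := Finsupp.single ![a, b, c] 1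

lemma pair_eq (σ : Fin 2 → (Fin (n+1) → ℕ)) : ![σ 0, σ 1] = σ := by
  funext j
  fin_cases j <;> rfl

lemma comp_succAbove_20 (σ : Fin 2 → (Fin (n+1) → ℕ)) :
    σ ∘ (0 : Fin 2).succAbove = ![σ 1] := by
  funext j
  fin_cases j
  show σ ((0 : Fin 2).succAbove 0) = σ 1
  congr 1

lemma comp_succAbove_21 (σ : Fin 2 → (Fin (n+1) → ℕ)) :
    σ ∘ (1 : Fin 2).succAbove = ![σ 0] := by
  funext j
  fin_cases j
  show σ ((1 : Fin 2).succAbove 0) = σ 0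
  congr 1

lemma bdry_edge (σ : Fin 2 → (Fin (n+1) → ℕ)) (x : ℂ) :
    bdry (n := n) (k := 0) (Finsupp.single σ x) =
      Finsupp.single ![σ 1] x - Finsupp.single ![σ 0] x := by
  rw [bdry_single, Fin.sum_univ_two, comp_succAbove_20, comp_succAbove_21]
  simp only [Fin.val_zero, pow_zero, one_mul, Fin.val_one, pow_one, neg_mul, neg_smul]
  rw [Finsupp.smul_single', Finsupp.smul_single']
  rw [mul_one, sub_eq_add_neg]

lemma comp_succAbove_30 (σ : Fin 3 → (Fin (n+1) → ℕ)) :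
    σ ∘ (0 : Fin 3).succAbove = ![σ 1, σ 2] := by
  funext j
  fin_cases j
  · show σ ((0 : Fin 3).succAbove 0) = σ 1
    congr 1
  · show σ ((0 : Fin 3).succAbove 1) = σ 2
    congr 1

lemma comp_succAbove_31 (σ : Fin 3 → (Fin (n+1) → ℕ)) :
    σ ∘ (1 : Fin 3).succAbove = ![σ 0, σ 2] := by
  funext j
  fin_cases j
  · show σ ((1 : Fin 3).succAbove 0) = σ 0
    congr 1
  · show σ ((1 : Fin 3).succAbove 1) = σ 2
    congr 1

lemma comp_succAbove_32 (σ : Fin 3 → (Fin (n+1) → ℕ)) :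
    σ ∘ (2 : Fin 3).succAbove = ![σ 0, σ 1] := by
  funext j
  fin_cases j
  · show σ ((2 : Fin 3).succAbove 0) = σ 0
    congr 1
  · show σ ((2 : Fin 3).succAbove 1) = σ 1
    congr 1

lemma bdry_tri (a b c : Fin (n+1) → ℕ) :
    bdry (tri a b c) = edg b c - edg a c + edg a b := by
  unfold tri edg
  rw [bdry_single, Fin.sum_univ_three, comp_succAbove_30, comp_succAbove_31, comp_succAbove_32]
  simp only [Matrix.cons_val_zero, Matrix.cons_val_one, Matrix.head_cons, Fin.val_zero,
    pow_zero, one_mul, Fin.val_one, pow_one, neg_mul, neg_smul, Finsupp.smul_single', mul_one]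
  norm_num
  abel

end EdgTri

section ChainInLemmas

variable {d n : ℕ} {w : Fin (n+1) → ℕ}

lemma chainIn_zero {k : ℕ} : ChainIn d n w (0 : PChain n k) := by
  intro σ hσ
  simp at hσ

lemma chainIn_single {k : ℕ} (σ : Fin (k+1) → (Fin (n+1) → ℕ)) (x : ℂ)
    (h : IsFace d n w (Finset.image σ Finset.univ)) :
    ChainIn d n w (Finsupp.single σ x) := by
  intro τ hτ
  have := Finsupp.support_single_subset hτ
  simp only [Finset.mem_singleton] at this
  rwa [this]

lemma chainIn_add {k : ℕ} {c₁ c₂ : PChain n k} (h₁ : ChainIn d n w c₁)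
    (h₂ : ChainIn d n w c₂) : ChainIn d n w (c₁ + c₂) := by
  intro σ hσ
  rcases Finset.mem_union.1 (Finsupp.support_add hσ) with h | h
  · exact h₁ σ h
  · exact h₂ σ h

lemma chainIn_smul {k : ℕ} {c : PChain n k} (x : ℂ) (h : ChainIn d n w c) :
    ChainIn d n w (x • c) := by
  intro σ hσ
  exact h σ (Finsupp.support_smul hσ)

lemma chainIn_neg {k : ℕ} {c : PChain n k} (h : ChainIn d n w c) :
    ChainIn d n w (-c) := by
  intro σ hσ
  rw [Finsupp.support_neg] at hσ
  exact h σ hσ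

lemma chainIn_sub {k : ℕ} {c₁ c₂ : PChain n k} (h₁ : ChainIn d n w c₁)
    (h₂ : ChainIn d n w c₂) : ChainIn d n w (c₁ - c₂) := by
  rw [sub_eq_add_neg]
  exact chainIn_add h₁ (chainIn_neg h₂)

lemma chainIn_finsetSum {k : ℕ} {α : Type*} (s : Finset α) (f : α → PChain n k)
    (h : ∀ a ∈ s, ChainIn d n w (f a)) : ChainIn d n w (∑ a ∈ s, f a) := by
  classical
  induction s using Finset.induction_on with
  | empty => simpa using chainIn_zero
  | @insert x s' hx ih =>
    rw [Finset.sum_insert hx]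
    exact chainIn_add (h x (Finset.mem_insert_self _ _))
      (ih fun a ha => h a (Finset.mem_insert_of_mem ha))

end ChainInLemmas

section Square

variable {d n : ℕ} {w : Fin (n+1) → ℕ}

lemma min_max_sum (x y : Fin (n+1) → ℕ) (hx : x ∈ Adn d n) (hy : y ∈ Adn d n) :
    ∑ i, min (x i) (y i) + ∑ i, max (x i) (y i) = 2 * d := by
  rw [← Finset.sum_add_distrib]
  have : ∑ i, (min (x i) (y i) + max (x i) (y i)) = ∑ i, (x i + y i) :=
    Finset.sum_congr rfl fun i _ => min_add_max _ _
  rw [this, Finset.sum_add_distrib, mem_Adn_iff.1 hx, mem_Adn_iff.1 hy]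
  ring

/-- Square-filling, apex case. -/
lemma sq_fill_apex (hw : 4*d ≤ ∑ i, w i) (a b c e : Fin (n+1) → ℕ)
    (ha : a ∈ Adn d n) (hb : b ∈ Adn d n) (hc : c ∈ Adn d n) (he : e ∈ Adn d n)
    (hab : ∀ i, a i + b i ≤ w i) (hbc : ∀ i, b i + c i ≤ w i)
    (hce : ∀ i, c i + e i ≤ w i) (hae : ∀ i, a i + e i ≤ w i)
    (hαβ : d ≤ ∑ i, min (a i) (c i) + ∑ i, min (b i) (e i)) :
    ∃ F : PChain n 2, ChainIn d n w F ∧ bdry F = edg a b + edg b c + edg c e - edg a e := by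
  have hmix : ∀ i, max (a i) (c i) + max (b i) (e i) ≤ w i := by
    intro i
    have h1 := hab i; have h2 := hbc i; have h3 := hce i; have h4 := hae i
    rcases max_choice (a i) (c i) with h5 | h5 <;> rcases max_choice (b i) (e i) with h6 | h6 <;>
      rw [h5, h6] <;> omega
  have hcapsum : ∑ i, (w i - (max (a i) (c i) + max (b i) (e i)))
      + ∑ i, (max (a i) (c i) + max (b i) (e i)) = ∑ i, w i := by
    rw [← Finset.sum_add_distrib]
    exact Finset.sum_congr rfl fun i _ => by have := hmix i; omega
  have hsplit : ∑ i, (max (a i) (c i) + max (b i) (e i))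
      = ∑ i, max (a i) (c i) + ∑ i, max (b i) (e i) := Finset.sum_add_distrib
  have h13 := min_max_sum a c ha hc
  have h24 := min_max_sum b e hb he
  obtain ⟨q, hq_le, hq_sum⟩ := exists_le_sum
    (fun i => w i - (max (a i) (c i) + max (b i) (e i))) d (by beta_reduce; omega)
  have hq : ∀ i, q i + max (a i) (c i) + max (b i) (e i) ≤ w i := by
    intro i
    have h1 := hq_le i
    have h2 := hmix i
    omega
  have hqA : q ∈ Adn d n := hq_sum
  refine ⟨tri a b q + tri b c q + tri c e q - tri a e q, ?_, ?_⟩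
  · have face : ∀ x y : Fin (n+1) → ℕ, x ∈ Adn d n → y ∈ Adn d n →
        (∀ i, x i + y i ≤ max (a i) (c i) + max (b i) (e i)) →
        ChainIn d n w (tri x y q) := by
      intro x y hxA hyA hxy
      apply chainIn_single
      apply isFace_of
      · intro j; fin_cases j <;> assumption
      · intro i
        rw [Fin.sum_univ_three]
        simp only [Matrix.cons_val_zero, Matrix.cons_val_one, Matrix.head_cons, Matrix.cons_val_two, Matrix.tail_cons]
        have h1 := hq i; have h2 := hxy i
        norm_num
        omega
    have lml : ∀ i, a i ≤ max (a i) (c i) := fun i => le_max_left _ _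
    have lmr : ∀ i, c i ≤ max (a i) (c i) := fun i => le_max_right _ _
    have lml2 : ∀ i, b i ≤ max (b i) (e i) := fun i => le_max_left _ _
    have lmr2 : ∀ i, e i ≤ max (b i) (e i) := fun i => le_max_right _ _
    exact chainIn_sub
      (chainIn_add (chainIn_add
        (face a b ha hb (fun i => by have := lml i; have := lml2 i; omega))
        (face b c hb hc (fun i => by have := lmr i; have := lml2 i; omega)))
        (face c e hc he (fun i => by have := lmr i; have := lmr2 i; omega)))
      (face a e ha he (fun i => by have := lml i; have := lmr2 i; omega))
  · rw [bdry_sub, bdry_add, bdry_add, bdry_tri, bdry_tri, bdry_tri, bdry_tri]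
    abel

end Square

section SquareFull

variable {d n : ℕ} {w : Fin (n+1) → ℕ}

/-- Square-filling, general case. -/
lemma sq_fill (hw : 4*d ≤ ∑ i, w i) (a b c e : Fin (n+1) → ℕ)
    (ha : a ∈ Adn d n) (hb : b ∈ Adn d n) (hc : c ∈ Adn d n) (he : e ∈ Adn d n)
    (hab : ∀ i, a i + b i ≤ w i) (hbc : ∀ i, b i + c i ≤ w i)
    (hce : ∀ i, c i + e i ≤ w i) (hae : ∀ i, a i + e i ≤ w i) :
    ∃ F : PChain n 2, ChainIn d n w F ∧ bdry F = edg a b + edg b c + edg c e - edg a e := by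
  classical
  by_cases hA : d ≤ ∑ i, min (a i) (c i) + ∑ i, min (b i) (e i)
  · exact sq_fill_apex hw a b c e ha hb hc he hab hbc hce hae hA
  by_cases hα : ∑ i, min (a i) (c i) = 0
  · -- chord a-c
    have hmin0 : ∀ i, min (a i) (c i) = 0 := by
      intro i
      exact (Finset.sum_eq_zero_iff.mp hα) i (Finset.mem_univ i)
    refine ⟨tri a b c + tri a c e, ?_, ?_⟩
    · apply chainIn_add <;> apply chainIn_single <;> apply isFace_of
      · intro j; fin_cases j <;> assumption
      · intro i
        rw [Fin.sum_univ_three]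
        simp only [Matrix.cons_val_zero, Matrix.cons_val_one, Matrix.head_cons, Matrix.cons_val_two, Matrix.tail_cons]
        have h0 := hmin0 i
        have h1 := hab i; have h2 := hbc i
        norm_num
        rcases Nat.min_eq_zero_iff.1 h0 with h | h <;> omega
      · intro j; fin_cases j <;> assumption
      · intro i
        rw [Fin.sum_univ_three]
        simp only [Matrix.cons_val_zero, Matrix.cons_val_one, Matrix.head_cons, Matrix.cons_val_two, Matrix.tail_cons]
        have h0 := hmin0 i
        have h3 := hce i; have h4 := hae i
        norm_num
        rcases Nat.min_eq_zero_iff.1 h0 with h | h <;> omega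
    · rw [bdry_add, bdry_tri, bdry_tri]
      abel
  by_cases hβ : ∑ i, min (b i) (e i) = 0
  · -- chord b-e
    have hmin0 : ∀ i, min (b i) (e i) = 0 := by
      intro i
      exact (Finset.sum_eq_zero_iff.mp hβ) i (Finset.mem_univ i)
    refine ⟨tri a b e + tri b c e, ?_, ?_⟩
    · apply chainIn_add <;> apply chainIn_single <;> apply isFace_of
      · intro j; fin_cases j <;> assumption
      · intro i
        rw [Fin.sum_univ_three]
        simp only [Matrix.cons_val_zero, Matrix.cons_val_one, Matrix.head_cons, Matrix.cons_val_two, Matrix.tail_cons]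
        have h0 := hmin0 i
        have h1 := hab i; have h4 := hae i
        norm_num
        rcases Nat.min_eq_zero_iff.1 h0 with h | h <;> omega
      · intro j; fin_cases j <;> assumption
      · intro i
        rw [Fin.sum_univ_three]
        simp only [Matrix.cons_val_zero, Matrix.cons_val_one, Matrix.head_cons, Matrix.cons_val_two, Matrix.tail_cons]
        have h0 := hmin0 i
        have h2 := hbc i; have h3 := hce i
        norm_num
        rcases Nat.min_eq_zero_iff.1 h0 with h | h <;> omega
    · rw [bdry_add, bdry_tri, bdry_tri]
      abel
  -- main moving cases
  have h13 := min_max_sum a c ha hc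
  have h24 := min_max_sum b e hb he
  have haS := mem_Adn_iff.1 ha
  have hbS := mem_Adn_iff.1 hb
  have hcS := mem_Adn_iff.1 hc
  have heS := mem_Adn_iff.1 he
  by_cases hord : ∑ i, min (b i) (e i) ≤ ∑ i, min (a i) (c i)
  · -- move at b : z covers e ∖ b
    have pbmax : ∀ i, b i + max (a i) (c i) ≤ w i := by
      intro i
      have h1 := hab i; have h2 := hbc i
      rcases max_choice (a i) (c i) with h | h <;> rw [h] <;> omega
    have hrcap : ∀ i, e i - min (b i) (e i) ≤ w i - (b i + max (a i) (c i)) := by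
      intro i
      have h1 := hce i; have h4 := hae i; have h5 := pbmax i
      rcases min_choice (b i) (e i) with h | h <;> rw [h] <;>
        rcases max_choice (a i) (c i) with h' | h' <;> rw [h'] <;> omega
    have hrsum : ∑ i, (e i - min (b i) (e i)) + ∑ i, min (b i) (e i) = d := by
      rw [← Finset.sum_add_distrib]
      rw [show ∑ i, (e i - min (b i) (e i) + min (b i) (e i)) = ∑ i, e i from
        Finset.sum_congr rfl fun i _ => by have : min (b i) (e i) ≤ e i := min_le_right _ _; omega]
      exact heS
    have hcapsum : ∑ i, (w i - (b i + max (a i) (c i))) + ∑ i, (b i + max (a i) (c i))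
        = ∑ i, w i := by
      rw [← Finset.sum_add_distrib]
      exact Finset.sum_congr rfl fun i _ => by have := pbmax i; omega
    have hbmaxsum : ∑ i, (b i + max (a i) (c i)) = ∑ i, b i + ∑ i, max (a i) (c i) :=
      Finset.sum_add_distrib
    obtain ⟨z, hrz, hzcap, hzs⟩ := exists_between_sum (fun i => e i - min (b i) (e i))
      (fun i => w i - (b i + max (a i) (c i))) hrcap d (by beta_reduce; omega)
      (by beta_reduce; omega)
    have hrz' : ∀ i, e i - min (b i) (e i) ≤ z i := hrz
    have hzcap' : ∀ i, z i ≤ w i - (b i + max (a i) (c i)) := hzcap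
    have hzs' : ∑ i, z i = d := hzs
    have hzA : z ∈ Adn d n := hzs'
    have hzbm : ∀ i, z i + b i + max (a i) (c i) ≤ w i := by
      intro i
      have h1 := hzcap' i; have h2 := pbmax i
      omega
    have hza : ∀ i, a i + z i ≤ w i := by
      intro i
      have h1 := hzbm i
      have h2 : a i ≤ max (a i) (c i) := le_max_left _ _
      omega
    have hzc : ∀ i, c i + z i ≤ w i := by
      intro i
      have h1 := hzbm i
      have h2 : c i ≤ max (a i) (c i) := le_max_right _ _
      omega
    have htriabz : ∀ i, a i + b i + z i ≤ w i := by
      intro i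
      have h1 := hzbm i
      have h2 : a i ≤ max (a i) (c i) := le_max_left _ _
      omega
    have htribcz : ∀ i, b i + c i + z i ≤ w i := by
      intro i
      have h1 := hzbm i
      have h2 : c i ≤ max (a i) (c i) := le_max_right _ _
      omega
    have hminze : ∑ i, (e i - min (b i) (e i)) ≤ ∑ i, min (z i) (e i) := by
      apply Finset.sum_le_sum
      intro i _
      have h1 := hrz' i
      have h2 : e i - min (b i) (e i) ≤ e i := by omega
      exact le_min h1 h2
    obtain ⟨F', hF'in, hF'⟩ := sq_fill_apex hw a z c e ha hzA hc he hza
      (fun i => by have := hzc i; omega) hce hae (by omega)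
    refine ⟨tri a b z + tri b c z + F' - (tri c z c + tri c c c), ?_, ?_⟩
    · refine chainIn_sub (chainIn_add (chainIn_add ?_ ?_) hF'in) (chainIn_add ?_ ?_)
      · apply chainIn_single
        apply isFace_of
        · intro j; fin_cases j <;> assumption
        · intro i
          rw [Fin.sum_univ_three]
          simp only [Matrix.cons_val_zero, Matrix.cons_val_one, Matrix.head_cons, Matrix.cons_val_two, Matrix.tail_cons]
          have := htriabz i
          norm_num
          omega
      · apply chainIn_single
        apply isFace_of
        · intro j; fin_cases j <;> assumption
        · intro i
          rw [Fin.sum_univ_three]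
          simp only [Matrix.cons_val_zero, Matrix.cons_val_one, Matrix.head_cons, Matrix.cons_val_two, Matrix.tail_cons]
          have := htribcz i
          norm_num
          omega
      · apply chainIn_single
        apply isFace_pair_sub _ c z hc hzA hzc
        intro j; fin_cases j <;> simp
      · apply chainIn_single
        apply isFace_single_sub _ c hc (fun i => by have := hbc i; omega)
        intro j; fin_cases j <;> simp
    · rw [bdry_sub, bdry_add, bdry_add, bdry_add, bdry_tri, bdry_tri, bdry_tri, bdry_tri, hF']
      abel
  · -- move at c : z' covers a ∖ c
    push_neg at hord
    have pcmax : ∀ i, c i + max (b i) (e i) ≤ w i := by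
      intro i
      have h1 := hbc i; have h2 := hce i
      rcases max_choice (b i) (e i) with h | h <;> rw [h] <;> omega
    have hrcap : ∀ i, a i - min (a i) (c i) ≤ w i - (c i + max (b i) (e i)) := by
      intro i
      have h1 := hab i; have h4 := hae i; have h5 := pcmax i
      rcases min_choice (a i) (c i) with h | h <;> rw [h] <;>
        rcases max_choice (b i) (e i) with h' | h' <;> rw [h'] <;> omega
    have hrsum : ∑ i, (a i - min (a i) (c i)) + ∑ i, min (a i) (c i) = d := by
      rw [← Finset.sum_add_distrib]
      rw [show ∑ i, (a i - min (a i) (c i) + min (a i) (c i)) = ∑ i, a i from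
        Finset.sum_congr rfl fun i _ => by have : min (a i) (c i) ≤ a i := min_le_left _ _; omega]
      exact haS
    have hcapsum : ∑ i, (w i - (c i + max (b i) (e i))) + ∑ i, (c i + max (b i) (e i))
        = ∑ i, w i := by
      rw [← Finset.sum_add_distrib]
      exact Finset.sum_congr rfl fun i _ => by have := pcmax i; omega
    have hcmaxsum : ∑ i, (c i + max (b i) (e i)) = ∑ i, c i + ∑ i, max (b i) (e i) :=
      Finset.sum_add_distrib
    obtain ⟨z, hrz, hzcap, hzs⟩ := exists_between_sum (fun i => a i - min (a i) (c i))
      (fun i => w i - (c i + max (b i) (e i))) hrcap d (by beta_reduce; omega)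
      (by beta_reduce; omega)
    have hrz' : ∀ i, a i - min (a i) (c i) ≤ z i := hrz
    have hzcap' : ∀ i, z i ≤ w i - (c i + max (b i) (e i)) := hzcap
    have hzs' : ∑ i, z i = d := hzs
    have hzA : z ∈ Adn d n := hzs'
    have hzcm : ∀ i, z i + c i + max (b i) (e i) ≤ w i := by
      intro i
      have h1 := hzcap' i; have h2 := pcmax i
      omega
    have hzb : ∀ i, b i + z i ≤ w i := by
      intro i
      have h1 := hzcm i
      have h2 : b i ≤ max (b i) (e i) := le_max_left _ _
      omega
    have hze : ∀ i, z i + e i ≤ w i := by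
      intro i
      have h1 := hzcm i
      have h2 : e i ≤ max (b i) (e i) := le_max_right _ _
      omega
    have htribcz : ∀ i, b i + c i + z i ≤ w i := by
      intro i
      have h1 := hzcm i
      have h2 : b i ≤ max (b i) (e i) := le_max_left _ _
      omega
    have htricez : ∀ i, c i + e i + z i ≤ w i := by
      intro i
      have h1 := hzcm i
      have h2 : e i ≤ max (b i) (e i) := le_max_right _ _
      omega
    have hminaz : ∑ i, (a i - min (a i) (c i)) ≤ ∑ i, min (a i) (z i) := by
      apply Finset.sum_le_sum
      intro i _
      have h1 := hrz' i
      have h2 : a i - min (a i) (c i) ≤ a i := by omega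
      exact le_min h2 h1
    obtain ⟨F', hF'in, hF'⟩ := sq_fill_apex hw a b z e ha hb hzA he hab hzb hze hae (by omega)
    refine ⟨tri b c z + tri c e z + F' - (tri e z e + tri e e e), ?_, ?_⟩
    · refine chainIn_sub (chainIn_add (chainIn_add ?_ ?_) hF'in) (chainIn_add ?_ ?_)
      · apply chainIn_single
        apply isFace_of
        · intro j; fin_cases j <;> assumption
        · intro i
          rw [Fin.sum_univ_three]
          simp only [Matrix.cons_val_zero, Matrix.cons_val_one, Matrix.head_cons, Matrix.cons_val_two, Matrix.tail_cons]
          have := htribcz i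
          norm_num
          omega
      · apply chainIn_single
        apply isFace_of
        · intro j; fin_cases j <;> assumption
        · intro i
          rw [Fin.sum_univ_three]
          simp only [Matrix.cons_val_zero, Matrix.cons_val_one, Matrix.head_cons, Matrix.cons_val_two, Matrix.tail_cons]
          have := htricez i
          norm_num
          omega
      · apply chainIn_single
        apply isFace_pair_sub _ e z he hzA (fun i => by have := hze i; omega)
        intro j; fin_cases j <;> simp
      · apply chainIn_single
        apply isFace_single_sub _ e he (fun i => by have := hce i; omega)
        intro j; fin_cases j <;> simp
    · rw [bdry_sub, bdry_add, bdry_add, bdry_add, bdry_tri, bdry_tri, bdry_tri, bdry_tri, hF']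
      abel

end SquareFull

section Master

variable {d n : ℕ}

lemma x_le_of_face {w : Fin (n+1) → ℕ} {k : ℕ} {σ : Fin (k+1) → (Fin (n+1) → ℕ)}
    (h : IsFace d n w (Finset.image σ Finset.univ)) (j : Fin (k+1)) :
    ∀ i, σ j i ≤ w i := by
  intro i
  have hmem : σ j ∈ Finset.image σ Finset.univ :=
    Finset.mem_image.2 ⟨j, Finset.mem_univ _, rfl⟩
  calc σ j i ≤ ∑ a ∈ Finset.image σ Finset.univ, a i :=
        Finset.single_le_sum (f := fun a => a i) (fun a _ => Nat.zero_le _) hmem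
    _ ≤ w i := h.2 i

lemma pair_le_of_face {w : Fin (n+1) → ℕ} {x y : Fin (n+1) → ℕ} (hxy : x ≠ y)
    (h : IsFace d n w (Finset.image ![x, y] Finset.univ)) :
    ∀ i, x i + y i ≤ w i := by
  intro i
  have hxmem : x ∈ Finset.image ![x, y] Finset.univ :=
    Finset.mem_image.2 ⟨0, Finset.mem_univ _, rfl⟩
  have hymem : y ∈ Finset.image ![x, y] Finset.univ :=
    Finset.mem_image.2 ⟨1, Finset.mem_univ _, rfl⟩
  have hsub : ({x, y} : Finset (Fin (n+1) → ℕ)) ⊆ Finset.image ![x, y] Finset.univ := by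
    intro a ha
    rcases Finset.mem_insert.1 ha with rfl | ha
    · exact hxmem
    · rw [Finset.mem_singleton] at ha
      subst ha
      exact hymem
  calc x i + y i = ∑ a ∈ ({x, y} : Finset (Fin (n+1) → ℕ)), a i := by
        rw [Finset.sum_pair hxy]
    _ ≤ ∑ a ∈ Finset.image ![x, y] Finset.univ, a i :=
        Finset.sum_le_sum_of_subset hsub
    _ ≤ w i := h.2 i

lemma master {w : Fin (n+1) → ℕ} (hw : 4*d ≤ ∑ i, w i) : Hvanish d n 1 w := by
  classical
  intro c hc hcyc
  have hcyc' : bdry c = 0 := hcyc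
  -- base vertex p
  obtain ⟨p, hple, hpsum⟩ := exists_le_sum w d (by omega)
  have hpA : p ∈ Adn d n := hpsum
  -- canonical intermediate vertex u x for each vertex x
  have hu : ∀ x : (Fin (n+1) → ℕ), ∃ ux : (Fin (n+1) → ℕ),
      (x ∈ Adn d n ∧ ∀ i, x i ≤ w i) →
      (ux ∈ Adn d n ∧ ∀ i, ux i + max (p i) (x i) ≤ w i) := by
    intro x
    by_cases hx : x ∈ Adn d n ∧ ∀ i, x i ≤ w i
    · have hpmax : ∀ i, max (p i) (x i) ≤ w i := by
        intro i
        rcases max_choice (p i) (x i) with h | h <;> rw [h]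
        · exact hple i
        · exact hx.2 i
      have hcapsum : ∑ i, (w i - max (p i) (x i)) + ∑ i, max (p i) (x i) = ∑ i, w i := by
        rw [← Finset.sum_add_distrib]
        exact Finset.sum_congr rfl fun i _ => by have := hpmax i; omega
      have hmaxle : ∑ i, max (p i) (x i) ≤ ∑ i, p i + ∑ i, x i := by
        rw [← Finset.sum_add_distrib]
        exact Finset.sum_le_sum fun i _ => by rcases max_choice (p i) (x i) with h | h <;>
          rw [h] <;> omega
      have hxsum := mem_Adn_iff.1 hx.1
      obtain ⟨z, hzle, hzsum⟩ := exists_le_sum (fun i => w i - max (p i) (x i)) d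
        (by beta_reduce; omega)
      have hzle' : ∀ i, z i ≤ w i - max (p i) (x i) := hzle
      exact ⟨z, fun _ => ⟨hzsum, fun i => by have := hzle' i; have := hpmax i; omega⟩⟩
    · exact ⟨x, fun h => absurd h hx⟩
  choose u hu' using hu
  -- the canonical filling of each supported edge
  have hD : ∀ x y : (Fin (n+1) → ℕ), ∃ Dxy : PChain n 2,
      (x ∈ Adn d n ∧ y ∈ Adn d n ∧ IsFace d n w (Finset.image ![x, y] Finset.univ)) →
      (ChainIn d n w Dxy ∧ bdry Dxy = Finsupp.single ![x, y] 1
        + (Finsupp.single ![p, u x] 1 + Finsupp.single ![u x, x] 1)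
        - (Finsupp.single ![p, u y] 1 + Finsupp.single ![u y, y] 1)) := by
    intro x y
    by_cases hhyp : x ∈ Adn d n ∧ y ∈ Adn d n ∧ IsFace d n w (Finset.image ![x, y] Finset.univ)
    swap
    · exact ⟨0, fun h => absurd h hhyp⟩
    obtain ⟨hxA, hyA, hface⟩ := hhyp
    by_cases hxy : x = y
    · -- degenerate edge
      subst hxy
      refine ⟨tri x x x, fun _ => ⟨?_, ?_⟩⟩
      · apply chainIn_single
        apply isFace_single_sub _ x hxA (x_le_of_face hface 0)
        intro j; fin_cases j <;> rfl
      · rw [bdry_tri]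
        simp only [edg]
        abel
    · -- genuine edge
      have hxyw : ∀ i, x i + y i ≤ w i := pair_le_of_face hxy hface
      have hxw : ∀ i, x i ≤ w i := fun i => by have := hxyw i; omega
      have hyw : ∀ i, y i ≤ w i := fun i => by have := hxyw i; omega
      obtain ⟨huxA, hux⟩ := hu' x ⟨hxA, hxw⟩
      obtain ⟨huyA, huy⟩ := hu' y ⟨hyA, hyw⟩
      have hxS := mem_Adn_iff.1 hxA
      have hyS := mem_Adn_iff.1 hyA
      -- the auxiliary vertex t
      have htmax : ∀ i, max (x i + y i) (p i) ≤ w i := by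
        intro i
        rcases max_choice (x i + y i) (p i) with h | h <;> rw [h]
        · exact hxyw i
        · exact hple i
      have hcapsum : ∑ i, (w i - max (x i + y i) (p i)) + ∑ i, max (x i + y i) (p i)
          = ∑ i, w i := by
        rw [← Finset.sum_add_distrib]
        exact Finset.sum_congr rfl fun i _ => by have := htmax i; omega
      have hmaxle : ∑ i, max (x i + y i) (p i) ≤ ∑ i, x i + ∑ i, y i + ∑ i, p i := by
        have : ∑ i, max (x i + y i) (p i) ≤ ∑ i, (x i + y i + p i) :=
          Finset.sum_le_sum fun i _ => by rcases max_choice (x i + y i) (p i) with h | h <;>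
            rw [h] <;> omega
        rw [Finset.sum_add_distrib, Finset.sum_add_distrib] at this
        exact this
      obtain ⟨t, htle, htsum⟩ := exists_le_sum (fun i => w i - max (x i + y i) (p i)) d
        (by beta_reduce; omega)
      have htle' : ∀ i, t i ≤ w i - max (x i + y i) (p i) := htle
      have htA : t ∈ Adn d n := htsum
      have htxy : ∀ i, x i + y i + t i ≤ w i := by
        intro i
        have h1 := htle' i; have h2 := htmax i
        have h3 : x i + y i ≤ max (x i + y i) (p i) := le_max_left _ _
        omega
      have htp : ∀ i, p i + t i ≤ w i := by
        intro i
        have h1 := htle' i; have h2 := htmax i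
        have h3 : p i ≤ max (x i + y i) (p i) := le_max_right _ _
        omega
      -- two squares
      obtain ⟨F₁, hF₁in, hF₁⟩ := sq_fill hw p (u x) x t hpA huxA hxA htA
        (fun i => by have := hux i; have : p i ≤ max (p i) (x i) := le_max_left _ _; omega)
        (fun i => by have := hux i; have : x i ≤ max (p i) (x i) := le_max_right _ _; omega)
        (fun i => by have := htxy i; omega)
        htp
      obtain ⟨F₂, hF₂in, hF₂⟩ := sq_fill hw p (u y) y t hpA huyA hyA htA
        (fun i => by have := huy i; have : p i ≤ max (p i) (y i) := le_max_left _ _; omega)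
        (fun i => by have := huy i; have : y i ≤ max (p i) (y i) := le_max_right _ _; omega)
        (fun i => by have := htxy i; omega)
        htp
      refine ⟨tri x y t + F₁ - F₂, fun _ => ⟨?_, ?_⟩⟩
      · refine chainIn_sub (chainIn_add ?_ hF₁in) hF₂in
        apply chainIn_single
        apply isFace_of
        · intro j; fin_cases j <;> assumption
        · intro i
          rw [Fin.sum_univ_three]
          simp only [Matrix.cons_val_zero, Matrix.cons_val_one, Matrix.head_cons, Matrix.cons_val_two, Matrix.tail_cons]
          have := htxy i
          norm_num
          omega
      · rw [bdry_sub, bdry_add, bdry_tri, hF₁, hF₂]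
        simp only [edg]
        abel
  choose D hD' using hD
  -- the filling
  refine ⟨∑ σ ∈ c.support, c σ • D (σ 0) (σ 1), ?_, ?_⟩
  · apply chainIn_finsetSum
    intro σ hσ
    apply chainIn_smul
    have hface := hc σ hσ
    rw [← pair_eq σ] at hface
    exact (hD' (σ 0) (σ 1) ⟨(hc σ hσ).1 (Finset.mem_image.2 ⟨0, Finset.mem_univ _, rfl⟩),
      (hc σ hσ).1 (Finset.mem_image.2 ⟨1, Finset.mem_univ _, rfl⟩), hface⟩).1
  · rw [bdry_finsetSum]
    have hterm : ∀ σ ∈ c.support, bdry (c σ • D (σ 0) (σ 1)) =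
        Finsupp.single σ (c σ)
        + c σ • (Finsupp.single ![p, u (σ 0)] 1 + Finsupp.single ![u (σ 0), σ 0] 1)
        - c σ • (Finsupp.single ![p, u (σ 1)] 1 + Finsupp.single ![u (σ 1), σ 1] 1) := by
      intro σ hσ
      have hface := hc σ hσ
      rw [← pair_eq σ] at hface
      have hspec := (hD' (σ 0) (σ 1) ⟨(hc σ hσ).1 (Finset.mem_image.2 ⟨0, Finset.mem_univ _, rfl⟩),
        (hc σ hσ).1 (Finset.mem_image.2 ⟨1, Finset.mem_univ _, rfl⟩), hface⟩).2
      rw [bdry_smul, hspec, pair_eq σ]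
      rw [smul_add, smul_sub, smul_add]
      rw [Finsupp.smul_single', mul_one]
      module
    rw [Finset.sum_congr rfl hterm]
    have hsplit : ∑ σ ∈ c.support, (Finsupp.single σ (c σ)
        + c σ • (Finsupp.single ![p, u (σ 0)] 1 + Finsupp.single ![u (σ 0), σ 0] 1)
        - c σ • (Finsupp.single ![p, u (σ 1)] 1 + Finsupp.single ![u (σ 1), σ 1] 1)) =
        (∑ σ ∈ c.support, Finsupp.single σ (c σ))
        + ((∑ σ ∈ c.support, c σ • (Finsupp.single ![p, u (σ 0)] 1 + Finsupp.single ![u (σ 0), σ 0] 1))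
        - (∑ σ ∈ c.support, c σ • (Finsupp.single ![p, u (σ 1)] 1 + Finsupp.single ![u (σ 1), σ 1] 1))) := by
      rw [← Finset.sum_sub_distrib, ← Finset.sum_add_distrib]
      apply Finset.sum_congr rfl
      intro σ _
      abel
    rw [hsplit]
    have hsing : ∑ σ ∈ c.support, Finsupp.single σ (c σ) = c := Finsupp.sum_single c
    rw [hsing]
    -- the path terms cancel because c is a cycle
    have hzero : (∑ σ ∈ c.support, c σ • ((Finsupp.single ![p, u (σ 0)] 1 + Finsupp.single ![u (σ 0), σ 0] 1 : PChain n 1)))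
        - (∑ σ ∈ c.support, c σ • ((Finsupp.single ![p, u (σ 1)] 1 + Finsupp.single ![u (σ 1), σ 1] 1 : PChain n 1))) = 0 := by
      let Φ : PChain n 0 →ₗ[ℂ] PChain n 1 := Finsupp.lsum ℂ fun τ =>
        LinearMap.toSpanSingleton ℂ (PChain n 1)
          (Finsupp.single ![p, u (τ 0)] 1 + Finsupp.single ![u (τ 0), τ 0] 1)
      have hΦ : ∀ (τ : Fin 1 → (Fin (n+1) → ℕ)) (v : ℂ), Φ (Finsupp.single τ v) =
          v • ((Finsupp.single ![p, u (τ 0)] 1 + Finsupp.single ![u (τ 0), τ 0] 1 : PChain n 1)) := by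
        intro τ v
        simp only [Φ, Finsupp.lsum_single, LinearMap.toSpanSingleton_apply]
      have hbc : bdry c = ∑ σ ∈ c.support, (Finsupp.single ![σ 1] (c σ) - Finsupp.single ![σ 0] (c σ)) := by
        conv_lhs => rw [← hsing]
        rw [bdry_finsetSum]
        apply Finset.sum_congr rfl
        intro σ _
        exact bdry_edge σ (c σ)
      have h0 : Φ (bdry c) = 0 := by rw [hcyc']; simp
      rw [hbc] at h0
      rw [map_sum] at h0
      have hterm2 : ∀ σ ∈ c.support, Φ (Finsupp.single ![σ 1] (c σ) - Finsupp.single ![σ 0] (c σ)) =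
          c σ • ((Finsupp.single ![p, u (σ 1)] 1 + Finsupp.single ![u (σ 1), σ 1] 1 : PChain n 1))
          - c σ • ((Finsupp.single ![p, u (σ 0)] 1 + Finsupp.single ![u (σ 0), σ 0] 1 : PChain n 1)) := by
        intro σ _
        rw [map_sub, hΦ, hΦ]
        rfl
      rw [Finset.sum_congr rfl hterm2, Finset.sum_sub_distrib] at h0
      -- h0 : ∑ (σ1 terms) - ∑ (σ0 terms) = 0
      have := sub_eq_zero.1 h0
      rw [sub_eq_zero]
      exact this.symm
    rw [hzero, add_zero]

end Master

lemma multiset_sum_coord {d n : ℕ} (s : Multiset (Fin (n+1) → ℕ))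
    (h : ∀ a ∈ s, a ∈ Adn d n) : ∑ i, s.sum i = Multiset.card s * d := by
  induction s using Multiset.induction_on with
  | empty => simp
  | cons a t ih =>
    rw [Multiset.sum_cons]
    have ha : a ∈ Adn d n := h a (Multiset.mem_cons_self a t)
    have hsum : ∑ i, (a + t.sum) i = ∑ i, a i + ∑ i, t.sum i := by
      simp [Pi.add_apply, Finset.sum_add_distrib]
    rw [hsum, mem_Adn_iff.1 ha, ih (fun b hb => h b (Multiset.mem_cons_of_mem hb))]
    rw [Multiset.card_cons]
    ring

/-- Lemma `H₁(Δ_{g+v}) = 0`.  Let `d ≥ 2` and let `g ∈ ℕ^{n+1}` be a sum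
of at least `4` elements of `A_{d,n}`.  Then for every `v ∈ ℕ^{n+1}` the first reduced
simplicial homology of `Δ_{g+v}` with `ℂ`-coefficients vanishes: every `1`-cycle supported
on `Δ_{g+v}` bounds a `2`-chain supported on `Δ_{g+v}`. -/
theorem stmt7 (d n : ℕ) (hd : 2 ≤ d) (g : Fin (n + 1) → ℕ)
    (hg : ∃ s : Multiset (Fin (n + 1) → ℕ),
      (∀ a ∈ s, a ∈ Adn d n) ∧ 4 ≤ Multiset.card s ∧ s.sum = g)
    (v : Fin (n + 1) → ℕ) :
    Hvanish d n 1 (g + v) := by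
  apply master
  obtain ⟨s, hsA, hcard, hsum⟩ := hg
  have h1 : ∑ i, g i = Multiset.card s * d := by
    rw [← hsum]
    exact multiset_sum_coord s hsA
  have h2 : ∑ i, (g + v) i = ∑ i, g i + ∑ i, v i := by
    simp [Pi.add_apply, Finset.sum_add_distrib]
  have h3 : 4 * d ≤ Multiset.card s * d := Nat.mul_le_mul_right d hcard
  omega
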